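/- Let C be an E-linear code of length 2n. Then the residue code of the right symplectic dual equals the symplectic dual of the torsion code: (C^{⊥_{S_R}})_Res = (C_Tor)^{⊥_S}, and the torsion code of the right symplectic dual is all of F₂^{2n}: (C^{⊥_{S_R}})_Tor = F₂^{2n}. -/

import Mathlib

open Finset

/-- The non-unital ring `E`, realized as pairs `(u, v) ∈ F₂ × F₂`
representing `uκ + vζ`. -/
def Ering : Type := (ZMod 2) × (ZMod 2)

namespace Ering

instance : AddCommGroup Ering := inferInstanceAs (AddCommGroup ((ZMod 2) × (ZMod 2)))
instance : DecidableEq Ering := inferInstanceAs (DecidableEq ((ZMod 2) × (ZMod 2)))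
instance : Fintype Ering := inferInstanceAs (Fintype ((ZMod 2) × (ZMod 2)))

instance : Mul Ering := ⟨fun a b => (a.1 * b.1, a.2 * b.1)⟩

instance : NonUnitalRing Ering :=
  { (inferInstance : AddCommGroup Ering), (inferInstance : Mul Ering) with
    left_distrib := by decide
    right_distrib := by decide
    zero_mul := by decide
    mul_zero := by decide
    mul_assoc := by decide }

/-- The generator κ. -/
def kappa : Ering := ((1 : ZMod 2), (0 : ZMod 2))
/-- The generator τ. -/
def tau : Ering := ((1 : ZMod 2), (1 : ZMod 2))
/-- ζ = κ + τ. -/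
def zeta : Ering := ((0 : ZMod 2), (1 : ZMod 2))

/-- The scalar action of `F₂` on `E`: `u • e = e` if `u = 1`, else `0`. -/
def fsmul (u : ZMod 2) (e : Ering) : Ering := if u = 1 then e else 0

/-- `E`-vectors of length `2n`, written as a pair `(u | v)` of halves of length `n`. -/
abbrev VE (n : ℕ) := (Fin n → Ering) × (Fin n → Ering)

/-- `F₂`-vectors of length `2n`, written as a pair of halves of length `n`. -/
abbrev VF (n : ℕ) := (Fin n → ZMod 2) × (Fin n → ZMod 2)

/-- Symplectic inner product on `E^{2n}`: `⟨(u|v),(u'|v')⟩ₛ = ⟨u,v'⟩ + ⟨v,u'⟩`. -/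
def sympE {n : ℕ} (x y : VE n) : Ering := ∑ i, x.1 i * y.2 i + ∑ i, x.2 i * y.1 i

/-- Symplectic inner product on `F₂^{2n}`. -/
def sympF {n : ℕ} (x y : VF n) : ZMod 2 := ∑ i, x.1 i * y.2 i + ∑ i, x.2 i * y.1 i

/-- An `E`-linear code: a left `E`-submodule of `E^{2n}`. -/
def IsLinearCode {n : ℕ} (C : Set (VE n)) : Prop :=
  (0 : VE n) ∈ C ∧ (∀ x ∈ C, ∀ y ∈ C, x + y ∈ C) ∧
    (∀ e : Ering, ∀ x ∈ C, ((fun i => e * x.1 i, fun i => e * x.2 i) : VE n) ∈ C)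

/-- Componentwise reduction `π : E^{2n} → F₂^{2n}`, `π(uκ + vζ) = u`. -/
def resVec {n : ℕ} (x : VE n) : VF n := (fun i => (x.1 i).1, fun i => (x.2 i).1)

/-- For `e ∈ E` and `v ∈ F₂^{2n}`, the vector `ev ∈ E^{2n}` with entries `vᵢ • e`. -/
def evec {n : ℕ} (e : Ering) (v : VF n) : VE n :=
  (fun i => fsmul (v.1 i) e, fun i => fsmul (v.2 i) e)

/-- The residue code `C_Res = π(C)`. -/
def resCode {n : ℕ} (C : Set (VE n)) : Set (VF n) := resVec '' C

/-- The torsion code `C_Tor = {v : ζv ∈ C}`. -/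
def torCode {n : ℕ} (C : Set (VE n)) : Set (VF n) := {v | evec zeta v ∈ C}

/-- The left symplectic dual. -/
def leftDual {n : ℕ} (C : Set (VE n)) : Set (VE n) := {z | ∀ w ∈ C, sympE z w = 0}

/-- The right symplectic dual. -/
def rightDual {n : ℕ} (C : Set (VE n)) : Set (VE n) := {z | ∀ w ∈ C, sympE w z = 0}

/-- The two-sided symplectic dual. -/
def dual {n : ℕ} (C : Set (VE n)) : Set (VE n) := leftDual C ∩ rightDual C

/-- The binary symplectic dual of `D ⊆ F₂^{2n}`. -/
def dualF {n : ℕ} (D : Set (VF n)) : Set (VF n) := {z | ∀ w ∈ D, sympF z w = 0}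

/-- The two-sided symplectic hull. -/
def SHull {n : ℕ} (C : Set (VE n)) : Set (VE n) := C ∩ dual C

/-- The left symplectic hull. -/
def LSHull {n : ℕ} (C : Set (VE n)) : Set (VE n) := C ∩ leftDual C

/-- The right symplectic hull. -/
def RSHull {n : ℕ} (C : Set (VE n)) : Set (VE n) := C ∩ rightDual C

/-- Symplectic hull of a binary code. -/
def SHullF {n : ℕ} (D : Set (VF n)) : Set (VF n) := D ∩ dualF D

/-- A free `E`-linear code: residue and torsion codes coincide. -/
def IsFree {n : ℕ} (C : Set (VE n)) : Prop := resCode C = torCode C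

end Ering

namespace Ering

lemma ering_ext : ∀ a b : Ering, a.1 = b.1 → a.2 = b.2 → a = b := by
  intro a b h1 h2; exact Prod.ext h1 h2

lemma fst_sum {ι : Type*} (s : Finset ι) (f : ι → Ering) :
    (∑ i ∈ s, f i).1 = ∑ i ∈ s, (f i).1 :=
  map_sum (AddMonoidHom.fst (ZMod 2) (ZMod 2)) f s

lemma snd_sum {ι : Type*} (s : Finset ι) (f : ι → Ering) :
    (∑ i ∈ s, f i).2 = ∑ i ∈ s, (f i).2 :=
  map_sum (AddMonoidHom.snd (ZMod 2) (ZMod 2)) f s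

lemma mul_fz : ∀ (e : Ering) (u : ZMod 2), e * fsmul u zeta = 0 := by decide

lemma fz_mul : ∀ (u : ZMod 2) (e : Ering), fsmul u zeta * e = (0, u * e.1) := by
  intro x y
  fin_cases x <;> rcases y with ⟨a, b⟩ <;> fin_cases a <;> fin_cases b <;> rfl

lemma mul_fk : ∀ (e : Ering) (u : ZMod 2), e * fsmul u kappa = (e.1 * u, e.2 * u) := by
  intro x y
  rcases x with ⟨a, b⟩ <;> fin_cases y <;> fin_cases a <;> fin_cases b <;> rfl

lemma zeta_mul : ∀ e : Ering, zeta * e = fsmul e.1 zeta := by decide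

lemma kappa_mul_add : ∀ e : Ering, kappa * e + e = fsmul e.2 zeta := by decide

lemma fk_fst : ∀ u : ZMod 2, (fsmul u kappa).1 = u := by decide

lemma sympF_comm {n : ℕ} (x y : VF n) : sympF x y = sympF y x := by
  unfold sympF
  rw [add_comm]
  congr 1 <;> exact Finset.sum_congr rfl (fun i _ => mul_comm _ _)

lemma sympE_zeta_left {n : ℕ} (v : VF n) (z : VE n) :
    sympE (evec zeta v) z = (0, sympF v (resVec z)) := by
  unfold sympE evec resVec sympF
  apply ering_ext
  · show (_ + _ : Ering).1 = 0
    have : ∀ (a b : Ering), (a + b).1 = a.1 + b.1 := fun a b => rfl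
    rw [this, fst_sum, fst_sum]
    simp [fz_mul]
  · show (_ + _ : Ering).2 = _
    have : ∀ (a b : Ering), (a + b).2 = a.2 + b.2 := fun a b => rfl
    rw [this, snd_sum, snd_sum]
    simp [fz_mul]

lemma sympE_kappa_right {n : ℕ} (w : VE n) (f : VF n) :
    sympE w (evec kappa f) =
      (sympF (resVec w) f, sympF (fun i => (w.1 i).2, fun i => (w.2 i).2) f) := by
  unfold sympE evec resVec sympF
  apply ering_ext
  · have : ∀ (a b : Ering), (a + b).1 = a.1 + b.1 := fun a b => rfl
    rw [this, fst_sum, fst_sum]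
    simp [mul_fk]
  · have : ∀ (a b : Ering), (a + b).2 = a.2 + b.2 := fun a b => rfl
    rw [this, snd_sum, snd_sum]
    simp [mul_fk]

lemma res_mem_tor {n : ℕ} (C : Set (VE n)) (hC : IsLinearCode C) {w : VE n} (hw : w ∈ C) :
    resVec w ∈ torCode C := by
  have h := hC.2.2 zeta w hw
  have : evec zeta (resVec w) = ((fun i => zeta * w.1 i, fun i => zeta * w.2 i) : VE n) := by
    apply Prod.ext <;> funext i <;> simp [evec, resVec, zeta_mul]
  rw [torCode, Set.mem_setOf_eq, this]
  exact h

lemma snd_mem_tor {n : ℕ} (C : Set (VE n)) (hC : IsLinearCode C) {w : VE n} (hw : w ∈ C) :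
    ((fun i => (w.1 i).2, fun i => (w.2 i).2) : VF n) ∈ torCode C := by
  have hk := hC.2.2 kappa w hw
  have h := hC.2.1 _ hk w hw
  have : evec zeta ((fun i => (w.1 i).2, fun i => (w.2 i).2) : VF n)
      = ((fun i => kappa * w.1 i, fun i => kappa * w.2 i) : VE n) + w := by
    apply Prod.ext <;> funext i <;> simp [evec, ← kappa_mul_add] <;> rfl
  rw [torCode, Set.mem_setOf_eq, this]
  exact h

end Ering

open Ering
/-- `(C^{⊥_{S_R}})_Res = (C_Tor)^{⊥_S}` and `(C^{⊥_{S_R}})_Tor = F₂^{2n}`. -/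
theorem Ering.rightDual_res_tor {n : ℕ} (C : Set (VE n)) (hC : IsLinearCode C) :
    resCode (rightDual C) = dualF (torCode C) ∧
    torCode (rightDual C) = Set.univ := by
  constructor
  · ext f
    constructor
    · rintro ⟨z, hz, rfl⟩ v hv
      have h := hz _ hv
      rw [sympE_zeta_left] at h
      have h2 : sympF v (resVec z) = 0 := congrArg Prod.snd h
      rw [sympF_comm]; exact h2
    · intro hf
      refine ⟨evec kappa f, ?_, ?_⟩
      · intro w hw
        rw [sympE_kappa_right]
        apply ering_ext
        · show sympF (resVec w) f = 0
          rw [sympF_comm]; exact hf _ (res_mem_tor C hC hw)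
        · show sympF _ f = 0
          rw [sympF_comm]; exact hf _ (snd_mem_tor C hC hw)
      · apply Prod.ext <;> funext i <;> simp [resVec, evec, fk_fst]
  · ext v
    simp only [Set.mem_univ, iff_true]
    intro w hw
    unfold sympE evec
    have : ∀ (a b : Ering), a = 0 → b = 0 → a + b = 0 := by intro a b h1 h2; rw [h1,h2,add_zero]
    apply this <;> exact Finset.sum_eq_zero (fun i _ => mul_fz _ _)
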